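/- arXiv:2506.17977 — 2 statements merged into one kernel-verified Lean document; each statement's English description precedes it below -/
import Mathlib

section
/- For a monotone submodular set function f with f(∅) = 0 on a finite ground set V, the greedy algorithm that iteratively adds the element with maximum marginal gain produces, after k steps, a set G_k with f(G_k) ≥ (1 − (1 − 1/k)^k)·max_{|S| ≤ k} f(S) ≥ (1 − 1/e)·max_{|S| ≤ k} f(S). -/
lemma greedy_tele {V : Type*} [DecidableEq V] (f : Finset V → ℝ)
    (hsub : ∀ S T : Finset V, ∀ u : V, S ⊆ T → u ∉ T →
      f (insert u T) - f T ≤ f (insert u S) - f S) :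
    ∀ D T : Finset V, Disjoint D T →
      f (D ∪ T) - f T ≤ ∑ u ∈ D, (f (insert u T) - f T) := by
  intro D
  induction D using Finset.induction_on with
  | empty => simp
  | @insert a D ha ih =>
    intro T hdisj
    have hdisj' : Disjoint D T := (Finset.disjoint_insert_left.mp hdisj).2
    have haT : a ∉ T := (Finset.disjoint_insert_left.mp hdisj).1
    have haDT : a ∉ D ∪ T := by simp [ha, haT]
    have h1 : f (insert a (D ∪ T)) - f (D ∪ T) ≤ f (insert a T) - f T :=
      hsub T (D ∪ T) a Finset.subset_union_right haDT
    have h2 := ih T hdisj'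
    rw [Finset.insert_union, Finset.sum_insert ha]
    linarith

/-- Greedy `(1 - 1/e)`-approximation for monotone submodular maximization:
after `k` greedy steps, `f(G_k) ≥ (1 - (1 - 1/k)^k)·OPT ≥ (1 - 1/e)·OPT`. -/
theorem greedy_submodular_approximation {V : Type*} [Fintype V] [DecidableEq V]
    (f : Finset V → ℝ)
    (hnn : ∀ S : Finset V, 0 ≤ f S)
    (hempty : f ∅ = 0)
    (hmono : ∀ S T : Finset V, S ⊆ T → f S ≤ f T)
    (hsub : ∀ S T : Finset V, ∀ u : V, S ⊆ T → u ∉ T →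
      f (insert u T) - f T ≤ f (insert u S) - f S)
    (k : ℕ) (hk : 0 < k)
    (G : ℕ → Finset V) (hG0 : G 0 = ∅)
    (hstep : ∀ i < k, ∃ u : V,
      G (i + 1) = insert u (G i) ∧
      ∀ w : V, f (insert w (G i)) - f (G i) ≤ f (insert u (G i)) - f (G i)) :
    ∀ S : Finset V, S.card ≤ k →
      (1 - 1 / Real.exp 1) * f S ≤ (1 - (1 - 1 / (k : ℝ)) ^ k) * f S ∧
      (1 - (1 - 1 / (k : ℝ)) ^ k) * f S ≤ f (G k) := by
  intro S hScard
  have hk0 : (0 : ℝ) < (k : ℝ) := by exact_mod_cast hk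
  have hq0 : (0 : ℝ) ≤ 1 - 1 / (k : ℝ) := by
    have : 1 / (k : ℝ) ≤ 1 := by
      rw [div_le_one hk0]; exact_mod_cast hk
    linarith
  -- one-step inequality
  have key : ∀ i < k, f S - f (G (i + 1)) ≤ (1 - 1 / (k : ℝ)) * (f S - f (G i)) := by
    intro i hi
    obtain ⟨u, hGu, hmax⟩ := hstep i hi
    set g := f (G (i + 1)) - f (G i) with hg
    have htele := greedy_tele f hsub (S \ G i) (G i) Finset.sdiff_disjoint
    rw [Finset.sdiff_union_self_eq_union] at htele
    have hmem : f S ≤ f (S ∪ G i) := hmono _ _ Finset.subset_union_left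
    have hbound : ∑ u ∈ (S \ G i), (f (insert u (G i)) - f (G i))
        ≤ (S \ G i).card • g := by
      apply Finset.sum_le_card_nsmul
      intro w _
      rw [hg, hGu]
      exact hmax w
    have hg0 : 0 ≤ g := by
      rw [hg, hGu]
      have := hmono (G i) (insert u (G i)) (Finset.subset_insert _ _)
      linarith
    have hcard : ((S \ G i).card : ℝ) ≤ (k : ℝ) := by
      have h1 : (S \ G i).card ≤ S.card := Finset.card_le_card (Finset.sdiff_subset)
      exact_mod_cast le_trans h1 hScard
    have hsum : ((S \ G i).card : ℝ) * g ≤ (k : ℝ) * g :=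
      mul_le_mul_of_nonneg_right hcard hg0
    have hkey : f S - f (G i) ≤ (k : ℝ) * g := by
      have := htele
      rw [nsmul_eq_mul] at hbound
      linarith
    have hdiv : (f S - f (G i)) / (k : ℝ) ≤ g := (div_le_iff₀ hk0).mpr (by linarith)
    have hexp : (1 - 1 / (k : ℝ)) * (f S - f (G i))
        = (f S - f (G i)) - (f S - f (G i)) / (k : ℝ) := by ring
    rw [hexp]
    have : f (G (i + 1)) = f (G i) + g := by rw [hg]; ring
    linarith
  have main : ∀ i, i ≤ k → f S - f (G i) ≤ (1 - 1 / (k : ℝ)) ^ i * f S := by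
    intro i
    induction i with
    | zero => intro _; simp [hG0, hempty]
    | succ i ih =>
      intro hik
      have hi : i < k := hik
      calc f S - f (G (i + 1)) ≤ (1 - 1 / (k : ℝ)) * (f S - f (G i)) := key i hi
        _ ≤ (1 - 1 / (k : ℝ)) * ((1 - 1 / (k : ℝ)) ^ i * f S) :=
            mul_le_mul_of_nonneg_left (ih hi.le) hq0
        _ = (1 - 1 / (k : ℝ)) ^ (i + 1) * f S := by ring
  have hmain := main k le_rfl
  constructor
  · have h1k : 1 - 1 / (k : ℝ) ≤ Real.exp (-(1 / (k : ℝ))) := by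
      have := Real.add_one_le_exp (-(1 / (k : ℝ)))
      linarith
    have hpow : (1 - 1 / (k : ℝ)) ^ k ≤ Real.exp (-(1 / (k : ℝ))) ^ k :=
      pow_le_pow_left₀ hq0 h1k k
    have heq : Real.exp (-(1 / (k : ℝ))) ^ k = Real.exp (-1) := by
      rw [← Real.exp_nat_mul]
      congr 1
      field_simp
    have hinv : Real.exp (-1) = 1 / Real.exp 1 := by
      rw [Real.exp_neg, one_div]
    have : (1 - 1 / (k : ℝ)) ^ k ≤ 1 / Real.exp 1 := by
      rw [← hinv, ← heq]; exact hpow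
    apply mul_le_mul_of_nonneg_right _ (hnn S)
    linarith
  · nlinarith [hmain]
end

section
/- For the Max-Sum Dispersion objective h(S) = Σ_{{u,v} ⊆ S} w(u,v) with nonnegative symmetric weights w satisfying the triangle inequality, the greedy algorithm that repeatedly picks a pair of remaining elements maximizing w and adds both achieves h(G) ≥ (1/2)·max_{|S| = k} h(S) when k is even. -/
open Finset

noncomputable def pairsum {V : Type} [DecidableEq V] (w : V → V → ℝ)
    (S : Finset V) : ℝ :=
  ∑ x ∈ S, ∑ y ∈ S \ {x}, w x y

lemma pairsum_insert {V : Type} [DecidableEq V] (w : V → V → ℝ)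
    (hsymm : ∀ u v : V, w u v = w v u) (a : V) (S : Finset V) (ha : a ∉ S) :
    pairsum w (insert a S) = pairsum w S + 2 * ∑ x ∈ S, w x a := by
  unfold pairsum
  rw [Finset.sum_insert ha]
  have h1 : insert a S \ {a} = S := by
    rw [Finset.sdiff_singleton_eq_erase, Finset.erase_insert ha]
  have h3 : ∀ x ∈ S, ∑ y ∈ insert a S \ {x}, w x y
      = w x a + ∑ y ∈ S \ {x}, w x y := by
    intro x hx
    have h2 : (insert a S \ {x} : Finset V) = insert a (S \ {x}) := by
      rw [Finset.sdiff_singleton_eq_erase, Finset.sdiff_singleton_eq_erase,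
        Finset.erase_insert_of_ne (by rintro rfl; exact ha hx)]
    rw [h2, Finset.sum_insert (fun h => ha (Finset.mem_sdiff.mp h).1)]
  rw [h1, Finset.sum_congr rfl h3, Finset.sum_add_distrib]
  have h4 : ∑ y ∈ S, w a y = ∑ y ∈ S, w y a :=
    Finset.sum_congr rfl (fun y _ => hsymm a y)
  rw [h4]; ring

lemma pairsum_union_le {V : Type} [DecidableEq V] (w : V → V → ℝ)
    (hsymm : ∀ u v : V, w u v = w v u) (W : ℝ) (hW : 0 ≤ W) :
    ∀ (U T : Finset V), Disjoint U T →
      (∀ x ∈ T ∪ U, ∀ y ∈ T ∪ U, x ≠ y → w x y ≤ W) →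
      pairsum w (T ∪ U)
        ≤ pairsum w T
          + (((T ∪ U).card : ℝ) * (((T ∪ U).card : ℝ) - 1)
             - ((T.card : ℝ)) * ((T.card : ℝ) - 1)) * W := by
  intro U
  induction U using Finset.induction_on with
  | empty =>
    intro T _ _
    simp
  | @insert a U ha ih =>
    intro T hdis hbound
    have haT : a ∉ T := fun h => (Finset.disjoint_left.mp hdis (mem_insert_self a U)) h
    have haTU : a ∉ T ∪ U := by simp [haT, ha]
    have hU : T ∪ insert a U = insert a (T ∪ U) := by rw [Finset.union_insert]
    have hdis' : Disjoint U T := (Finset.disjoint_insert_left.mp hdis).2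
    have hbound' : ∀ x ∈ T ∪ U, ∀ y ∈ T ∪ U, x ≠ y → w x y ≤ W := by
      intro x hx y hy hxy
      exact hbound x (by rw [hU]; exact mem_insert_of_mem hx) y
        (by rw [hU]; exact mem_insert_of_mem hy) hxy
    have hIH := ih T hdis' hbound'
    have hsum : ∑ x ∈ T ∪ U, w x a ≤ ((T ∪ U).card : ℝ) * W := by
      have hb : ∀ x ∈ T ∪ U, w x a ≤ W := fun x hx =>
        hbound x (by rw [hU]; exact mem_insert_of_mem hx) a
          (by rw [hU]; exact mem_insert_self a _) (fun h => haTU (h ▸ hx))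
      calc ∑ x ∈ T ∪ U, w x a ≤ (T ∪ U).card • W := Finset.sum_le_card_nsmul _ _ _ hb
        _ = ((T ∪ U).card : ℝ) * W := nsmul_eq_mul _ _
    rw [hU, pairsum_insert w hsymm a (T ∪ U) haTU,
      Finset.card_insert_of_notMem haTU]
    push_cast
    set q : ℝ := ((T ∪ U).card : ℝ) with hq
    set c : ℝ := ((T.card : ℝ)) with hc
    have hexp : pairsum w T + ((q + 1) * (q + 1 - 1) - c * (c - 1)) * W
        = (pairsum w T + (q * (q - 1) - c * (c - 1)) * W) + 2 * (q * W) := by ring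
    rw [hexp]
    have h2q : 2 * (∑ x ∈ T ∪ U, w x a) ≤ 2 * (q * W) := by linarith
    linarith

lemma abel_aux : ∀ (M : ℕ) (c b v : ℕ → ℝ),
    (∀ i j, i ≤ j → j < M → v j ≤ v i) →
    (∀ j, j < M → 0 ≤ v j) →
    (∀ m, m ≤ M → ∑ j ∈ Finset.range m, c j ≤ ∑ j ∈ Finset.range m, b j) →
    ∑ j ∈ Finset.range M, c j * v j ≤ ∑ j ∈ Finset.range M, b j * v j := by
  intro M
  induction M with
  | zero => intro c b v _ _ _; simp
  | succ M ih =>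
    intro c b v hmono hnn hps
    have key : ∀ f : ℕ → ℝ, ∑ j ∈ Finset.range (M+1), f j * v j
        = (∑ j ∈ Finset.range M, f j * (v j - v M))
          + v M * ∑ j ∈ Finset.range (M+1), f j := by
      intro f
      have h : ∑ j ∈ Finset.range M, f j * (v j - v M)
          = (∑ j ∈ Finset.range M, f j * v j)
            - (∑ j ∈ Finset.range M, f j) * v M := by
        simp only [mul_sub]
        rw [Finset.sum_sub_distrib, Finset.sum_mul]
      rw [h, Finset.sum_range_succ, Finset.sum_range_succ (f := f)]
      ring
    have h1 : ∑ j ∈ Finset.range M, c j * (v j - v M)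
        ≤ ∑ j ∈ Finset.range M, b j * (v j - v M) := by
      refine ih c b (fun j => v j - v M) ?_ ?_ ?_
      · intro i j hij hj
        have := hmono i j hij (hj.trans (Nat.lt_succ_self M))
        linarith
      · intro j hj
        have := hmono j M (le_of_lt hj) (Nat.lt_succ_self M)
        linarith
      · intro m hm
        exact hps m (hm.trans (Nat.le_succ M))
    have h2 : ∑ j ∈ Finset.range (M+1), c j ≤ ∑ j ∈ Finset.range (M+1), b j :=
      hps (M+1) le_rfl
    have h3 : 0 ≤ v M := hnn M (Nat.lt_succ_self M)
    rw [key c, key b]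
    exact add_le_add h1 (mul_le_mul_of_nonneg_left h2 h3)


/-- Max-Sum Dispersion: the sum of the weights over all unordered pairs in `S`
(for a symmetric weight function, half the sum over ordered distinct pairs). -/
noncomputable def dispersion {V : Type} [DecidableEq V] (w : V → V → ℝ)
    (S : Finset V) : ℝ :=
  (∑ u ∈ S, ∑ v ∈ S \ {u}, w u v) / 2

/-- The greedy pair-selection algorithm for Max-Sum Dispersion with metric
weights achieves a `1/2`-approximation when `k` is even. -/
theorem greedy_dispersion_half_approx {V : Type} [Fintype V] [DecidableEq V]
    (w : V → V → ℝ)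
    (hnn : ∀ u v : V, 0 ≤ w u v)
    (hsymm : ∀ u v : V, w u v = w v u)
    (htri : ∀ u v x : V, w u v ≤ w u x + w x v)
    (k : ℕ) (hk : 0 < k) (hkeven : Even k)
    (G : ℕ → Finset V) (hG0 : G 0 = ∅)
    (hstep : ∀ i < k / 2, ∃ u v : V, u ≠ v ∧ u ∉ G i ∧ v ∉ G i ∧
      G (i + 1) = insert u (insert v (G i)) ∧
      ∀ x y : V, x ∉ G i → y ∉ G i → x ≠ y → w x y ≤ w u v) :
    ∀ S : Finset V, S.card = k →
      (1 / 2) * dispersion w S ≤ dispersion w (G (k / 2)) := by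
  intro S hS
  have hdvd : 2 ∣ k := hkeven.two_dvd
  set M := k / 2 with hMdef
  have hkM : 2 * M = k := Nat.mul_div_cancel' hdvd
  have hM1 : 1 ≤ M := by omega
  have hne : Nonempty V := by
    obtain ⟨u0, -⟩ := hstep 0 (by omega)
    exact ⟨u0⟩
  choose! u v huvne hu hv hGs hmax using hstep
  -- basic structure
  have hstepsub : ∀ i, i < M → G i ⊆ G (i+1) := by
    intro i hi
    rw [hGs i hi]
    exact (Finset.subset_insert _ _).trans (Finset.subset_insert _ _)
  have hsub : ∀ j, j ≤ M → ∀ i, i ≤ j → G i ⊆ G j := by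
    intro j
    induction j with
    | zero =>
      intro _ i hi
      have : i = 0 := Nat.le_zero.mp hi
      subst this; exact subset_rfl
    | succ j ihj =>
      intro hj i hi
      by_cases h : i = j + 1
      · subst h; exact subset_rfl
      · have hij : i ≤ j := by omega
        exact (ihj (by omega) i hij).trans (hstepsub j (by omega))
  have hunotmem : ∀ m, m < M → u m ∉ insert (v m) (G m) := by
    intro m hm
    simp only [Finset.mem_insert]
    push_neg
    exact ⟨huvne m hm, hu m hm⟩
  have hGcard : ∀ m, m ≤ M → (G m).card = 2 * m := by
    intro m
    induction m with
    | zero => intro _; simp [hG0]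
    | succ m ihm =>
      intro hm
      have hm' : m < M := by omega
      rw [hGs m hm', Finset.card_insert_of_notMem (hunotmem m hm'),
        Finset.card_insert_of_notMem (hv m hm'), ihm (by omega)]
      omega
  have hwmono : ∀ i j, i ≤ j → j < M → w (u j) (v j) ≤ w (u i) (v i) := by
    intro i j hij hj
    have hiM : i < M := lt_of_le_of_lt hij hj
    refine hmax i hiM (u j) (v j) ?_ ?_ (huvne j hj)
    · exact fun h => hu j hj (hsub j (le_of_lt hj) i hij h)
    · exact fun h => hv j hj (hsub j (le_of_lt hj) i hij h)
  -- greedy lower bound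
  have hC1 : ∀ m, m ≤ M → ∀ p q : V,
      2 * ∑ j ∈ Finset.range m, w (u j) (v j) ≤ ∑ x ∈ G m, (w x p + w x q) := by
    intro m
    induction m with
    | zero => intro _ p q; simp [hG0]
    | succ m ihm =>
      intro hm p q
      have hm' : m < M := by omega
      rw [hGs m hm', Finset.sum_insert (hunotmem m hm'), Finset.sum_insert (hv m hm')]
      have t1 : w (u m) (v m) ≤ w (u m) p + w (v m) p := by
        have h := htri (u m) (v m) p
        rw [hsymm p (v m)] at h
        exact h
      have t2 : w (u m) (v m) ≤ w (u m) q + w (v m) q := by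
        have h := htri (u m) (v m) q
        rw [hsymm q (v m)] at h
        exact h
      have h3 := ihm (by omega) p q
      rw [Finset.sum_range_succ]
      linarith
  have hrec : ∀ m, m < M → pairsum w (G (m+1))
      = pairsum w (G m) + 2 * w (u m) (v m)
        + 2 * ∑ x ∈ G m, (w x (u m) + w x (v m)) := by
    intro m hm
    rw [hGs m hm, pairsum_insert w hsymm (u m) _ (hunotmem m hm),
      pairsum_insert w hsymm (v m) _ (hv m hm),
      Finset.sum_insert (hv m hm), Finset.sum_add_distrib, hsymm (v m) (u m)]
    ring
  have hC3 : ∀ m, m ≤ M →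
      2 * ∑ j ∈ Finset.range m, (2*((m:ℝ) - (j:ℝ)) - 1) * w (u j) (v j)
        ≤ pairsum w (G m) := by
    intro m
    induction m with
    | zero => intro _; simp [hG0, pairsum]
    | succ m ihm =>
      intro hm
      have hm' : m < M := by omega
      have h1 := ihm (by omega)
      have h2 := hC1 m (by omega) (u m) (v m)
      rw [hrec m hm', Finset.sum_range_succ]
      have hcoef : ∀ j ∈ Finset.range m,
          (2*(((m+1:ℕ):ℝ) - (j:ℝ)) - 1) * w (u j) (v j)
          = (2*((m:ℝ) - (j:ℝ)) - 1) * w (u j) (v j) + 2 * w (u j) (v j) := by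
        intro j _; push_cast; ring
      rw [Finset.sum_congr rfl hcoef, Finset.sum_add_distrib, ← Finset.mul_sum]
      have hlast : (2*(((m+1:ℕ):ℝ) - (m:ℝ)) - 1) * w (u m) (v m)
          = w (u m) (v m) := by push_cast; ring
      rw [hlast]
      linarith
  -- optimum side
  have hNlb : ∀ m, m ≤ M → k ≤ (S \ G m).card + 2 * m := by
    intro m hm
    have h1 : S.card - (G m).card ≤ (S \ G m).card := Finset.le_card_sdiff _ _
    rw [hS, hGcard m hm] at h1
    have h2 : (G m).card = 2 * m := hGcard m hm
    omega
  have hNub : ∀ m, (S \ G m).card ≤ k := by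
    intro m
    rw [← hS]
    exact Finset.card_le_card Finset.sdiff_subset
  have hTstep : ∀ m, m < M →
      (S \ G (m+1)) ∪ ((S \ G m) ∩ {u m, v m}) = S \ G m := by
    intro m hm
    rw [hGs m hm]
    ext x
    simp only [Finset.mem_union, Finset.mem_sdiff, Finset.mem_inter,
      Finset.mem_insert, Finset.mem_singleton]
    tauto
  have hdisj : ∀ m, m < M →
      Disjoint ((S \ G m) ∩ ({u m, v m} : Finset V)) (S \ G (m+1)) := by
    intro m hm
    rw [Finset.disjoint_left]
    intro x hx hx'
    rw [hGs m hm] at hx'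
    have h1 := (Finset.mem_inter.mp hx).2
    have h2 := (Finset.mem_sdiff.mp hx').2
    simp only [Finset.mem_insert, Finset.mem_singleton] at h1
    rcases h1 with h | h
    · exact h2 (h ▸ Finset.mem_insert_self _ _)
    · exact h2 (h ▸ Finset.mem_insert_of_mem (Finset.mem_insert_self _ _))
  have hFstep : ∀ m, m < M →
      pairsum w (S \ G m) ≤ pairsum w (S \ G (m+1))
        + ((((S \ G m).card:ℝ) * (((S \ G m).card:ℝ) - 1)
           - ((S \ G (m+1)).card:ℝ) * (((S \ G (m+1)).card:ℝ) - 1)) * w (u m) (v m)) := by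
    intro m hm
    have hbound : ∀ x ∈ (S \ G (m+1)) ∪ ((S \ G m) ∩ {u m, v m}),
        ∀ y ∈ (S \ G (m+1)) ∪ ((S \ G m) ∩ {u m, v m}),
        x ≠ y → w x y ≤ w (u m) (v m) := by
      rw [hTstep m hm]
      intro x hx y hy hxy
      exact hmax m hm x y (Finset.mem_sdiff.mp hx).2 (Finset.mem_sdiff.mp hy).2 hxy
    have h := pairsum_union_le w hsymm (w (u m) (v m)) (hnn _ _)
      ((S \ G m) ∩ {u m, v m}) (S \ G (m+1)) (hdisj m hm) hbound
    rw [hTstep m hm] at h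
    linarith
  have hFlast : pairsum w (S \ G M)
      ≤ (((S \ G M).card:ℝ) * (((S \ G M).card:ℝ) - 1)) * w (u (M-1)) (v (M-1)) := by
    have hM' : M - 1 < M := by omega
    have hbound : ∀ x ∈ (∅ : Finset V) ∪ (S \ G M),
        ∀ y ∈ (∅ : Finset V) ∪ (S \ G M),
        x ≠ y → w x y ≤ w (u (M-1)) (v (M-1)) := by
      simp only [Finset.empty_union]
      intro x hx y hy hxy
      have hsub' : G (M-1) ⊆ G M := hsub M le_rfl (M-1) (by omega)
      exact hmax (M-1) hM' x y
        (fun h => (Finset.mem_sdiff.mp hx).2 (hsub' h))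
        (fun h => (Finset.mem_sdiff.mp hy).2 (hsub' h)) hxy
    have h := pairsum_union_le w hsymm (w (u (M-1)) (v (M-1))) (hnn _ _)
      (S \ G M) ∅ (Finset.disjoint_empty_right _) hbound
    simp only [Finset.empty_union, Finset.card_empty] at h
    have hpe : pairsum w (∅ : Finset V) = 0 := by simp [pairsum]
    rw [hpe] at h
    push_cast at h
    linarith
  -- the coefficient sequence
  set f : ℕ → ℝ := fun m => ((S \ G m).card:ℝ) * (((S \ G m).card:ℝ) - 1) with hf
  set c : ℕ → ℝ := fun j => (f j - f (j+1))
      + (if j = M - 1 then f M else 0) with hc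
  set b : ℕ → ℝ := fun j => 4*((k:ℝ) - 1 - 2*(j:ℝ)) with hb
  have hMmem : M - 1 ∈ Finset.range M := Finset.mem_range.mpr (by omega)
  -- bound on pairsum S
  have key1 : pairsum w S ≤ ∑ j ∈ Finset.range M, c j * w (u j) (v j) := by
    have e1 : ∀ j ∈ Finset.range M, c j * w (u j) (v j)
        = (f j - f (j+1)) * w (u j) (v j)
          + (if j = M - 1 then f M * w (u j) (v j) else 0) := by
      intro j _
      rw [hc]
      dsimp only
      split_ifs with h
      · ring
      · ring
    rw [Finset.sum_congr rfl e1, Finset.sum_add_distrib]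
    have e2 : ∑ j ∈ Finset.range M,
        (if j = M - 1 then f M * w (u j) (v j) else 0)
        = f M * w (u (M-1)) (v (M-1)) := by
      rw [Finset.sum_ite_eq' (Finset.range M) (M-1)
        (fun j => f M * w (u j) (v j)), if_pos hMmem]
    rw [e2]
    have htel : ∑ j ∈ Finset.range M,
        (pairsum w (S \ G j) - pairsum w (S \ G (j+1)))
        = pairsum w (S \ G 0) - pairsum w (S \ G M) :=
      Finset.sum_range_sub' (fun j => pairsum w (S \ G j)) M
    have e3 : ∑ j ∈ Finset.range M,
        (pairsum w (S \ G j) - pairsum w (S \ G (j+1)))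
        ≤ ∑ j ∈ Finset.range M, (f j - f (j+1)) * w (u j) (v j) := by
      refine Finset.sum_le_sum ?_
      intro j hj
      have := hFstep j (Finset.mem_range.mp hj)
      rw [hf]
      dsimp only
      linarith
    have e4 : pairsum w (S \ G 0) = pairsum w S := by rw [hG0, Finset.sdiff_empty]
    have e5 : pairsum w (S \ G M) ≤ f M * w (u (M-1)) (v (M-1)) := by
      rw [hf]; dsimp only; exact hFlast
    linarith
  -- partial sums comparison
  have hsumb : ∀ m : ℕ, ∑ j ∈ Finset.range m, b j = 4*(m:ℝ)*((k:ℝ) - (m:ℝ)) := by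
    intro m
    induction m with
    | zero => simp
    | succ m ihm =>
      rw [Finset.sum_range_succ, ihm, hb]
      dsimp only
      push_cast
      ring
  have hftel : ∀ m : ℕ, ∑ j ∈ Finset.range m, (f j - f (j+1)) = f 0 - f m :=
    fun m => Finset.sum_range_sub' f m
  have hf0 : f 0 = (k:ℝ) * ((k:ℝ) - 1) := by
    rw [hf]; dsimp only; rw [hG0, Finset.sdiff_empty, hS]
  have hps : ∀ m, m ≤ M →
      ∑ j ∈ Finset.range m, c j ≤ ∑ j ∈ Finset.range m, b j := by
    intro m hm
    have hsplit : ∑ j ∈ Finset.range m, c j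
        = (f 0 - f m) + ∑ j ∈ Finset.range m, (if j = M - 1 then f M else 0) := by
      rw [hc]
      dsimp only
      rw [Finset.sum_add_distrib, hftel m]
    rw [hsplit, hsumb m]
    have ha0 : (0:ℝ) ≤ ((S \ G m).card:ℝ) := Nat.cast_nonneg _
    have ha1 : (k:ℝ) ≤ ((S \ G m).card:ℝ) + 2*(m:ℝ) := by
      exact_mod_cast hNlb m hm
    have ha2 : ((S \ G m).card:ℝ) ≤ (k:ℝ) := Nat.cast_le.mpr (hNub m)
    by_cases hmM : m = M
    · subst hmM
      have hif : ∑ j ∈ Finset.range M, (if j = M - 1 then f M else 0) = f M := by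
        rw [Finset.sum_ite_eq' (Finset.range M) (M-1) (fun _ => f M), if_pos hMmem]
      rw [hif]
      have hfM : f M = ((S \ G M).card:ℝ) * (((S \ G M).card:ℝ) - 1) := by rw [hf]
      have hkr : (k:ℝ) = 2*(M:ℝ) := by exact_mod_cast (congrArg (Nat.cast : ℕ → ℝ) hkM).symm
      rw [hf0]
      nlinarith [Nat.cast_nonneg (α := ℝ) k]
    · have hmM' : m < M := lt_of_le_of_ne hm hmM
      have hif : ∑ j ∈ Finset.range m, (if j = M - 1 then f M else 0) = 0 := by
        rw [Finset.sum_ite_eq' (Finset.range m) (M-1) (fun _ => f M),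
          if_neg (by simp only [Finset.mem_range]; omega)]
      rw [hif, hf0]
      have hfm : f m = ((S \ G m).card:ℝ) * (((S \ G m).card:ℝ) - 1) := by rw [hf]
      rw [hfm]
      have hm2 : 2*(m:ℝ) + 2 ≤ (k:ℝ) := by
        have : 2*m + 2 ≤ k := by omega
        exact_mod_cast this
      have hx : (0:ℝ) ≤ ((S \ G m).card:ℝ) + 2*(m:ℝ) - (k:ℝ) := by linarith
      have hy : (0:ℝ) ≤ ((S \ G m).card:ℝ) + (k:ℝ) - 2*(m:ℝ) - 1 := by linarith
      nlinarith [mul_nonneg hx hy]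
  -- Abel summation
  have hwnn' : ∀ j, j < M → 0 ≤ w (u j) (v j) := fun j _ => hnn _ _
  have habel := abel_aux M c b (fun j => w (u j) (v j)) hwmono hwnn' hps
  -- relate b-sum to greedy dispersion
  have hkr : (k:ℝ) = 2*(M:ℝ) := by exact_mod_cast (congrArg (Nat.cast : ℕ → ℝ) hkM).symm
  have hfin1 : ∑ j ∈ Finset.range M, b j * w (u j) (v j)
      ≤ 2 * pairsum w (G M) := by
    have e : ∀ j ∈ Finset.range M, b j * w (u j) (v j)
        = 2*(2*((2*((M:ℝ) - (j:ℝ)) - 1) * w (u j) (v j))) := by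
      intro j _
      rw [hb]
      dsimp only
      rw [hkr]
      ring
    rw [Finset.sum_congr rfl e, ← Finset.mul_sum, ← Finset.mul_sum]
    have := hC3 M le_rfl
    linarith
  have hgoal : pairsum w S ≤ 2 * pairsum w (G M) := by linarith
  have hd1 : dispersion w S = pairsum w S / 2 := rfl
  have hd2 : dispersion w (G M) = pairsum w (G M) / 2 := rfl
  rw [hd1, hd2]
  linarith
end
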